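/- Define for z > 0 the function S(z) := 3 + z·(K_1(z)/K_2(z)) + ( 4·(K_1/K_2) + z·(K_1/K_2)² − z ) / ( 3·(K_1/K_2) + z·(K_1/K_2)² − z − 4/z ). Then for 0 < z ≤ 1/10, | S(z) − 3 | ≤ (7/10) z². In particular the squared speed of sound (∂p/∂ρ)|_η = 1/S(z) satisfies |1/S(z) − 1/3| ≤ z² for such z. -/

import Mathlib

open Real MeasureTheory

/-- `K_1(z) = z⁻¹ ∫_z^∞ e^{-λ}(λ²−z²)^{1/2} dλ`. -/
noncomputable def K1 (z : ℝ) : ℝ :=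
  z⁻¹ * ∫ l in Set.Ioi z, Real.exp (-l) * Real.sqrt (l ^ 2 - z ^ 2)

/-- `K_2(z) = z⁻² ∫_z^∞ λ e^{-λ}(λ²−z²)^{1/2} dλ`. -/
noncomputable def K2 (z : ℝ) : ℝ :=
  z ^ (-2 : ℤ) * ∫ l in Set.Ioi z, l * Real.exp (-l) * Real.sqrt (l ^ 2 - z ^ 2)

/-- `S(z) = (∂_z|_η ρ)/(∂_z|_η p)`, the reciprocal of the squared speed of sound. -/
noncomputable def S (z : ℝ) : ℝ :=
  3 + z * (K1 z / K2 z) +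
    (4 * (K1 z / K2 z) + z * (K1 z / K2 z) ^ 2 - z) /
      (3 * (K1 z / K2 z) + z * (K1 z / K2 z) ^ 2 - z - 4 / z)

namespace SoundAux

lemma hd1 (x : ℝ) : HasDerivAt (fun x : ℝ => Real.exp (-x)) (-Real.exp (-x)) x := by
  simpa [Function.comp_def] using (Real.hasDerivAt_exp (-x)).comp x (hasDerivAt_neg x)

lemma hdx (x : ℝ) : HasDerivAt (fun x : ℝ => -((x + 1) * Real.exp (-x)))
    (x * Real.exp (-x)) x := by
  have h2 : HasDerivAt (fun x : ℝ => (x + 1) * Real.exp (-x))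
      (1 * Real.exp (-x) + (x + 1) * -Real.exp (-x)) x :=
    ((hasDerivAt_id x).add_const 1).mul (hd1 x)
  exact h2.neg.congr_deriv (by ring)

lemma hdx2 (x : ℝ) : HasDerivAt (fun x : ℝ => -((x ^ 2 + 2 * x + 2) * Real.exp (-x)))
    (x ^ 2 * Real.exp (-x)) x := by
  have hp : HasDerivAt (fun x : ℝ => x ^ 2 + 2 * x + 2) (2 * x + 2) x := by
    have := ((hasDerivAt_pow 2 x).add ((hasDerivAt_id x).const_mul 2)).add_const 2
    simpa using this
  have h2 := (hp.mul (hd1 x)).neg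
  exact h2.congr_deriv (by ring)

lemma tendx : Filter.Tendsto (fun x : ℝ => -((x + 1) * Real.exp (-x)))
    Filter.atTop (nhds 0) := by
  have h1 := tendsto_pow_mul_exp_neg_atTop_nhds_zero 1
  have h2 := Real.tendsto_exp_neg_atTop_nhds_zero
  have := (h1.add h2).neg
  simp only [pow_one, add_zero, neg_zero] at this
  refine this.congr fun x => by ring

lemma tendx2 : Filter.Tendsto (fun x : ℝ => -((x ^ 2 + 2 * x + 2) * Real.exp (-x)))
    Filter.atTop (nhds 0) := by
  have h1 := tendsto_pow_mul_exp_neg_atTop_nhds_zero 2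
  have h2 := tendsto_pow_mul_exp_neg_atTop_nhds_zero 1
  have h3 := Real.tendsto_exp_neg_atTop_nhds_zero
  have := (h1.add ((h2.const_mul 2).add (h3.const_mul 2))).neg
  simp only [add_zero, mul_zero, neg_zero, pow_one] at this
  refine this.congr fun x => by ring

variable {z : ℝ}

lemma posx (hz : 0 < z) : ∀ x ∈ Set.Ioi z, 0 ≤ x * Real.exp (-x) := fun x hx =>
  mul_nonneg (le_of_lt (hz.trans hx)) (Real.exp_pos _).le

lemma posx2 : ∀ x ∈ Set.Ioi z, 0 ≤ x ^ 2 * Real.exp (-x) := fun x _ =>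
  mul_nonneg (sq_nonneg _) (Real.exp_pos _).le

lemma intOn_x (hz : 0 < z) : IntegrableOn (fun l => l * Real.exp (-l)) (Set.Ioi z) :=
  integrableOn_Ioi_deriv_of_nonneg' (fun x _ => hdx x) (posx hz) tendx

lemma intOn_x2 (hz : 0 < z) : IntegrableOn (fun l => l ^ 2 * Real.exp (-l)) (Set.Ioi z) :=
  integrableOn_Ioi_deriv_of_nonneg' (fun x _ => hdx2 x) posx2 tendx2

lemma integral_x_exp (hz : 0 < z) :
    ∫ l in Set.Ioi z, l * Real.exp (-l) = (z + 1) * Real.exp (-z) := by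
  have := integral_Ioi_of_hasDerivAt_of_nonneg' (fun x _ => hdx x) (posx hz) tendx
  rw [this]; ring

lemma integral_x2_exp (hz : 0 < z) :
    ∫ l in Set.Ioi z, l ^ 2 * Real.exp (-l) = (z ^ 2 + 2 * z + 2) * Real.exp (-z) := by
  have := integral_Ioi_of_hasDerivAt_of_nonneg' (a := z)
    (fun x _ => hdx2 x) (posx2 (z := z)) tendx2
  rw [this]; ring

lemma intOn_exp (hz : 0 < z) : IntegrableOn (fun l => Real.exp (-l)) (Set.Ioi z) := by
  simpa using exp_neg_integrableOn_Ioi z one_pos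

lemma sqrt_le (hz : 0 < z) {l : ℝ} (hl : l ∈ Set.Ioi z) :
    Real.sqrt (l ^ 2 - z ^ 2) ≤ l := by
  have hlz : z < l := hl
  calc Real.sqrt (l ^ 2 - z ^ 2) ≤ Real.sqrt (l ^ 2) :=
        Real.sqrt_le_sqrt (by nlinarith [sq_nonneg z])
    _ = l := by rw [Real.sqrt_sq (by linarith : (0:ℝ) ≤ l)]

lemma le_sqrt (hz : 0 < z) {l : ℝ} (hl : l ∈ Set.Ioi z) :
    l - z ≤ Real.sqrt (l ^ 2 - z ^ 2) := by
  have hlz : z < l := hl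
  calc l - z = Real.sqrt ((l - z) ^ 2) := (Real.sqrt_sq (by linarith)).symm
    _ ≤ Real.sqrt (l ^ 2 - z ^ 2) := Real.sqrt_le_sqrt (by nlinarith)

lemma intOn_A (hz : 0 < z) :
    IntegrableOn (fun l => Real.exp (-l) * Real.sqrt (l ^ 2 - z ^ 2)) (Set.Ioi z) := by
  refine Integrable.mono (intOn_x hz) ?_ ?_
  · exact (Continuous.mul (by continuity) ((continuous_pow 2).sub
      continuous_const).sqrt).aestronglyMeasurable
  · refine (ae_restrict_iff' measurableSet_Ioi).2 (Filter.Eventually.of_forall fun l hl => ?_)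
    have h1 := sqrt_le hz hl
    have h2 : (0:ℝ) ≤ Real.sqrt (l ^ 2 - z ^ 2) := Real.sqrt_nonneg _
    have hlz : z < l := hl
    have he := (Real.exp_pos (-l)).le
    rw [Real.norm_eq_abs, Real.norm_eq_abs, abs_of_nonneg (by positivity),
      abs_of_nonneg (by nlinarith)]
    nlinarith

lemma intOn_B (hz : 0 < z) :
    IntegrableOn (fun l => l * Real.exp (-l) * Real.sqrt (l ^ 2 - z ^ 2)) (Set.Ioi z) := by
  refine Integrable.mono (intOn_x2 hz) ?_ ?_
  · exact (Continuous.mul (by continuity) ((continuous_pow 2).sub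
      continuous_const).sqrt).aestronglyMeasurable
  · refine (ae_restrict_iff' measurableSet_Ioi).2 (Filter.Eventually.of_forall fun l hl => ?_)
    have h1 := sqrt_le hz hl
    have h2 : (0:ℝ) ≤ Real.sqrt (l ^ 2 - z ^ 2) := Real.sqrt_nonneg _
    have hlz : z < l := hl
    have he := (Real.exp_pos (-l)).le
    rw [Real.norm_eq_abs, Real.norm_eq_abs,
      abs_of_nonneg (mul_nonneg (mul_nonneg (hz.trans hlz).le he) h2),
      abs_of_nonneg (mul_nonneg (sq_nonneg l) he)]
    nlinarith [mul_le_mul_of_nonneg_left h1 (mul_nonneg (hz.trans hlz).le he)]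

lemma A_bounds (hz : 0 < z) :
    Real.exp (-z) ≤ (∫ l in Set.Ioi z, Real.exp (-l) * Real.sqrt (l ^ 2 - z ^ 2)) ∧
    (∫ l in Set.Ioi z, Real.exp (-l) * Real.sqrt (l ^ 2 - z ^ 2)) ≤ (1 + z) * Real.exp (-z) := by
  constructor
  · have hlow : (∫ l in Set.Ioi z, (l * Real.exp (-l) - z * Real.exp (-l)))
        ≤ ∫ l in Set.Ioi z, Real.exp (-l) * Real.sqrt (l ^ 2 - z ^ 2) := by
      refine setIntegral_mono_on ((intOn_x hz).sub ((intOn_exp hz).const_mul z))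
        (intOn_A hz) measurableSet_Ioi fun l hl => ?_
      have h1 := le_sqrt hz hl
      have he := (Real.exp_pos (-l)).le
      nlinarith
    have heq : (∫ l in Set.Ioi z, (l * Real.exp (-l) - z * Real.exp (-l))) = Real.exp (-z) := by
      rw [integral_sub (intOn_x hz) ((intOn_exp hz).const_mul z), integral_x_exp hz,
        MeasureTheory.integral_const_mul, integral_exp_neg_Ioi]
      ring
    linarith [heq ▸ hlow]
  · have hup : (∫ l in Set.Ioi z, Real.exp (-l) * Real.sqrt (l ^ 2 - z ^ 2))
        ≤ ∫ l in Set.Ioi z, l * Real.exp (-l) := by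
      refine setIntegral_mono_on (intOn_A hz) (intOn_x hz) measurableSet_Ioi fun l hl => ?_
      have h1 := sqrt_le hz hl
      have he := (Real.exp_pos (-l)).le
      nlinarith
    rw [integral_x_exp hz] at hup
    linarith

lemma B_bounds (hz : 0 < z) :
    (z + 2) * Real.exp (-z) ≤
      (∫ l in Set.Ioi z, l * Real.exp (-l) * Real.sqrt (l ^ 2 - z ^ 2)) ∧
    (∫ l in Set.Ioi z, l * Real.exp (-l) * Real.sqrt (l ^ 2 - z ^ 2))
      ≤ (z ^ 2 + 2 * z + 2) * Real.exp (-z) := by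
  constructor
  · have hlow : (∫ l in Set.Ioi z, (l ^ 2 * Real.exp (-l) - z * (l * Real.exp (-l))))
        ≤ ∫ l in Set.Ioi z, l * Real.exp (-l) * Real.sqrt (l ^ 2 - z ^ 2) := by
      refine setIntegral_mono_on ((intOn_x2 hz).sub ((intOn_x hz).const_mul z))
        (intOn_B hz) measurableSet_Ioi fun l hl => ?_
      have h1 := le_sqrt hz hl
      have he := (Real.exp_pos (-l)).le
      have hlz : z < l := hl
      nlinarith [mul_le_mul_of_nonneg_left h1 (mul_nonneg (hz.trans hlz).le he)]
    have heq : (∫ l in Set.Ioi z, (l ^ 2 * Real.exp (-l) - z * (l * Real.exp (-l))))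
        = (z + 2) * Real.exp (-z) := by
      rw [integral_sub (intOn_x2 hz) ((intOn_x hz).const_mul z), integral_x2_exp hz,
        MeasureTheory.integral_const_mul, integral_x_exp hz]
      ring
    linarith [heq ▸ hlow]
  · have hup : (∫ l in Set.Ioi z, l * Real.exp (-l) * Real.sqrt (l ^ 2 - z ^ 2))
        ≤ ∫ l in Set.Ioi z, l ^ 2 * Real.exp (-l) := by
      refine setIntegral_mono_on (intOn_B hz) (intOn_x2 hz) measurableSet_Ioi fun l hl => ?_
      have h1 := sqrt_le hz hl
      have he := (Real.exp_pos (-l)).le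
      have hlz : z < l := hl
      nlinarith [mul_le_mul_of_nonneg_left h1 (mul_nonneg (hz.trans hlz).le he)]
    rw [integral_x2_exp hz] at hup
    linarith

/-- The key ratio estimate: `|K1/K2 - z/2| ≤ z²/2`. -/
lemma ratio_bound (hz : 0 < z) (hz' : z ≤ 1 / 10) : |K1 z / K2 z - z / 2| ≤ z ^ 2 / 2 := by
  obtain ⟨hA1, hA2⟩ := A_bounds hz
  obtain ⟨hB1, hB2⟩ := B_bounds hz
  set A := ∫ l in Set.Ioi z, Real.exp (-l) * Real.sqrt (l ^ 2 - z ^ 2) with hA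
  set B := ∫ l in Set.Ioi z, l * Real.exp (-l) * Real.sqrt (l ^ 2 - z ^ 2) with hB
  clear_value A B
  have hE : 0 < Real.exp (-z) := Real.exp_pos _
  have hBpos : 0 < B := lt_of_lt_of_le (by positivity) hB1
  have hK : K1 z / K2 z = z * A / B := by
    rw [K1, K2, ← hA, ← hB, zpow_neg, zpow_two]
    have hz' := hz.ne'
    have hB' := hBpos.ne'
    field_simp
  rw [hK, abs_le]
  constructor
  · have h : z / 2 - z ^ 2 / 2 ≤ z * A / B := by
      rw [le_div_iff₀ hBpos]
      nlinarith [mul_le_mul_of_nonneg_left hB2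
          (show (0:ℝ) ≤ z / 2 - z ^ 2 / 2 by nlinarith),
        mul_le_mul_of_nonneg_left hA1 hz.le, sq_nonneg z,
        mul_nonneg (mul_nonneg hz.le hz.le) hE.le,
        mul_nonneg (mul_nonneg (mul_nonneg hz.le hz.le) hz.le) hE.le,
        mul_nonneg (mul_nonneg (mul_nonneg (mul_nonneg hz.le hz.le) hz.le) hz.le) hE.le]
    linarith
  · have h : z * A / B ≤ z / 2 + z ^ 2 / 2 := by
      rw [div_le_iff₀ hBpos]
      nlinarith [mul_le_mul_of_nonneg_left hA2 hz.le,
        mul_le_mul_of_nonneg_left hB1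
          (show (0:ℝ) ≤ z / 2 + z ^ 2 / 2 by positivity),
        mul_nonneg (mul_nonneg hz.le hz.le) hE.le,
        mul_nonneg (mul_nonneg (mul_nonneg hz.le hz.le) hz.le) hE.le]
    linarith

/-- Algebraic part: bounds on S given the ratio bound. -/
lemma S_bounds (z r : ℝ) (hz : 0 < z) (hz' : z ≤ 1 / 10) (hr : |r - z / 2| ≤ z ^ 2 / 2) :
    0 ≤ z * r + (4 * r + z * r ^ 2 - z) / (3 * r + z * r ^ 2 - z - 4 / z) ∧
    z * r + (4 * r + z * r ^ 2 - z) / (3 * r + z * r ^ 2 - z - 4 / z) ≤ (55 / 100) * z ^ 2 := by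
  rw [abs_le] at hr
  obtain ⟨hr1, hr2⟩ := hr
  have hrl : z / 2 - z ^ 2 / 2 ≤ r := by linarith
  have hru : r ≤ z / 2 + z ^ 2 / 2 := by linarith
  have hrpos : 0 < r := by nlinarith
  have hz2 : z ^ 2 ≤ 1 / 100 := by nlinarith
  have hr11 : r ≤ 11 / 200 := by nlinarith
  have hz3 : z ^ 2 * z ≤ z ^ 2 * (1 / 10) := mul_le_mul_of_nonneg_left hz' (sq_nonneg z)
  set D := 3 * r + z * r ^ 2 - z - 4 / z with hD
  have hq : z * D = 3 * z * r + z ^ 2 * r ^ 2 - z ^ 2 - 4 := by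
    rw [hD]; field_simp
  clear_value D
  have hqneg : z * D ≤ -(39 / 10) := by
    rw [hq]
    nlinarith [mul_le_mul hz' hr11 hrpos.le (by norm_num : (0:ℝ) ≤ 1/10),
      mul_le_mul (mul_le_mul hz' hr11 hrpos.le (by norm_num : (0:ℝ) ≤ 1/10))
        (mul_le_mul hz' hr11 hrpos.le (by norm_num : (0:ℝ) ≤ 1/10))
        (mul_nonneg hz.le hrpos.le) (by norm_num : (0:ℝ) ≤ 1/10 * (11/200)),
      sq_nonneg z, mul_nonneg hz.le hrpos.le]
  have hqneg' : z * D < 0 := by linarith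
  have hfrac : (4 * r + z * r ^ 2 - z) / D = (z * (4 * r + z * r ^ 2 - z)) / (z * D) :=
    (mul_div_mul_left _ _ hz.ne').symm
  have hNpos : 0 ≤ 4 * r + z * r ^ 2 - z := by nlinarith
  constructor
  · rw [hfrac]
    have hlow : -((45 / 100) * z ^ 2) ≤ (z * (4 * r + z * r ^ 2 - z)) / (z * D) := by
      rw [le_div_iff_of_neg hqneg']
      nlinarith [mul_le_mul_of_nonneg_left hqneg
          (show (0:ℝ) ≤ 45 / 100 * z ^ 2 by positivity),
        mul_le_mul_of_nonneg_left hru (show (0:ℝ) ≤ 4 * z by positivity),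
        mul_le_mul hr11 hr11 hrpos.le (by norm_num : (0:ℝ) ≤ 11/200),
        sq_nonneg z, hz3, mul_nonneg (sq_nonneg z) (sq_nonneg r),
        mul_le_mul_of_nonneg_left
          (mul_le_mul hr11 hr11 hrpos.le (by norm_num : (0:ℝ) ≤ 11/200)) (sq_nonneg z)]
    nlinarith [mul_le_mul_of_nonneg_left hrl hz.le]
  · rw [hfrac]
    have hup : (z * (4 * r + z * r ^ 2 - z)) / (z * D) ≤ 0 :=
      div_nonpos_of_nonneg_of_nonpos (by positivity) hqneg'.le
    nlinarith [mul_le_mul_of_nonneg_left hru hz.le]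

end SoundAux

/-- For `0 < z ≤ 1/10`, `|S(z) − 3| ≤ (7/10) z²`; in particular the squared speed
of sound `1/S(z)` satisfies `|1/S(z) − 1/3| ≤ z²`. -/
theorem speed_of_sound_small_z (z : ℝ) (hz : 0 < z) (hz' : z ≤ 1 / 10) :
    |S z - 3| ≤ (7 / 10) * z ^ 2 ∧ |1 / S z - 1 / 3| ≤ z ^ 2 := by
  obtain ⟨h0, h55⟩ := SoundAux.S_bounds z (K1 z / K2 z) hz hz' (SoundAux.ratio_bound hz hz')
  have hS : S z - 3 = z * (K1 z / K2 z) +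
      (4 * (K1 z / K2 z) + z * (K1 z / K2 z) ^ 2 - z) /
        (3 * (K1 z / K2 z) + z * (K1 z / K2 z) ^ 2 - z - 4 / z) := by
    rw [S]; ring
  have h1 : 0 ≤ S z - 3 := hS ▸ h0
  have h2 : S z - 3 ≤ (55 / 100) * z ^ 2 := hS ▸ h55
  have hz2 : z ^ 2 ≤ 1 / 100 := by nlinarith
  have hSpos : 0 < S z := by linarith
  constructor
  · rw [abs_of_nonneg h1]; nlinarith
  · have heq2 : 1 / 3 - 1 / S z = (S z - 3) / (3 * S z) := by
      rw [div_sub_div _ _ (by norm_num : (3:ℝ) ≠ 0) (ne_of_gt hSpos), one_mul, mul_one]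
    rw [show 1 / S z - 1 / 3 = -(1 / 3 - 1 / S z) by ring, abs_neg, heq2,
      abs_of_nonneg (by positivity), div_le_iff₀ (by positivity)]
    nlinarith
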